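/- Fix n ≥ 1 and ε = 1/(n+1). The extremal points of the compact convex set Δ_{M,ε} = {(p_k)_{k=0}^M : 0 ≤ p_k ≤ 1-ε, Σ p_k = 1} are exactly the vectors q_{ε,k_1,k_2} (for k_1 ≠ k_2) whose k_1-entry is 1-ε, whose k_2-entry is ε, and whose other entries are 0. -/

import Mathlib

lemma sum_two_ite (m : ℕ) (k₁ k₂ : Fin m) (h : k₁ ≠ k₂) (a b : ℝ) :
    ∑ j, (if j = k₁ then a else if j = k₂ then b else 0) = a + b := by
  have key : ∀ j : Fin m, (if j = k₁ then a else if j = k₂ then b else 0)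
      = (if j = k₁ then a else 0) + (if j = k₂ then b else 0) := by
    intro j
    by_cases h1 : j = k₁
    · subst h1
      simp [h]
    · simp [h1]
  simp only [key, Finset.sum_add_distrib, Finset.sum_ite_eq', Finset.mem_univ, if_true]

lemma eq_of_sum_eq_of_ne (m : ℕ) (k : Fin m) (f g : Fin m → ℝ)
    (h : ∀ j, j ≠ k → f j = g j) (hs : ∑ j, f j = ∑ j, g j) : f k = g k := by
  have h1 : f k + ∑ j ∈ Finset.univ.erase k, f j = ∑ j, f j :=
    Finset.add_sum_erase _ f (Finset.mem_univ k)
  have h2 : g k + ∑ j ∈ Finset.univ.erase k, g j = ∑ j, g j :=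
    Finset.add_sum_erase _ g (Finset.mem_univ k)
  have h3 : ∑ j ∈ Finset.univ.erase k, f j = ∑ j ∈ Finset.univ.erase k, g j :=
    Finset.sum_congr rfl fun j hj => h j (Finset.ne_of_mem_erase hj)
  linarith

/-- For `M ≥ 1`, `n ≥ 1` and `ε = 1/(n+1)`, the extreme points of the compact
convex set `Δ_{M,ε} = {(p_k) : 0 ≤ p_k ≤ 1-ε, Σ p_k = 1}` are exactly the
vectors `q_{ε,k₁,k₂}` (for `k₁ ≠ k₂`) whose `k₁`-entry is `1-ε`, whose
`k₂`-entry is `ε`, and whose other entries vanish. -/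
theorem extremePoints_of_truncated_simplex (M n : ℕ) (hM : 1 ≤ M) (hn : 1 ≤ n)
    (ε : ℝ) (hε : ε = 1 / (n + 1)) :
    Set.extremePoints ℝ
        {p : Fin (M + 1) → ℝ | (∀ k, 0 ≤ p k ∧ p k ≤ 1 - ε) ∧ ∑ k, p k = 1} =
      {q : Fin (M + 1) → ℝ | ∃ k₁ k₂ : Fin (M + 1), k₁ ≠ k₂ ∧
        q = fun j => if j = k₁ then 1 - ε else if j = k₂ then ε else 0} := by
  have hn2 : (2:ℝ) ≤ (n:ℝ) + 1 := by
    have : (1:ℝ) ≤ (n:ℝ) := by exact_mod_cast hn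
    linarith
  have hε0 : 0 < ε := by rw [hε]; positivity
  have hεhalf : ε ≤ 1/2 := by
    rw [hε, div_le_div_iff₀ (by linarith) (by norm_num)]
    linarith
  ext p
  constructor
  · -- extreme point → has the special form
    rintro ⟨⟨hbound, hsum⟩, hext⟩
    -- key: at most one coordinate strictly between 0 and 1-ε
    have hkey : ∀ i j : Fin (M+1), i ≠ j →
        ¬(0 < p i ∧ p i < 1 - ε ∧ 0 < p j ∧ p j < 1 - ε) := by
      rintro i j hij ⟨h1, h2, h3, h4⟩
      set δ : ℝ := min (min (p i) (p j)) (min (1 - ε - p i) (1 - ε - p j)) with hδdef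
      have hδ0 : 0 < δ :=
        lt_min (lt_min h1 h3) (lt_min (by linarith) (by linarith))
      have hδ1 : δ ≤ p i := le_trans (min_le_left _ _) (min_le_left _ _)
      have hδ2 : δ ≤ p j := le_trans (min_le_left _ _) (min_le_right _ _)
      have hδ3 : δ ≤ 1 - ε - p i := le_trans (min_le_right _ _) (min_le_left _ _)
      have hδ4 : δ ≤ 1 - ε - p j := le_trans (min_le_right _ _) (min_le_right _ _)
      set x : Fin (M+1) → ℝ := fun t => p t + ((if t = i then δ else 0) + (if t = j then -δ else 0))
        with hxdef
      set y : Fin (M+1) → ℝ := fun t => p t + ((if t = i then -δ else 0) + (if t = j then δ else 0))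
        with hydef
      have hxi : x i = p i + δ := by simp [hxdef, hij]
      have hxj : x j = p j - δ := by
        have hji : ¬ (j = i) := fun h => hij h.symm
        simp [hxdef, hji, sub_eq_add_neg]
      have hxt : ∀ t, t ≠ i → t ≠ j → x t = p t := by
        intro t h1' h2'; simp [hxdef, h1', h2']
      have hyi : y i = p i - δ := by simp [hydef, hij, sub_eq_add_neg]
      have hyj : y j = p j + δ := by
        have hji : ¬ (j = i) := fun h => hij h.symm
        simp [hydef, hji]
      have hyt : ∀ t, t ≠ i → t ≠ j → y t = p t := by
        intro t h1' h2'; simp [hydef, h1', h2']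
      have hx : x ∈ {p : Fin (M + 1) → ℝ | (∀ k, 0 ≤ p k ∧ p k ≤ 1 - ε) ∧ ∑ k, p k = 1} := by
        constructor
        · intro k
          by_cases h1' : k = i
          · subst h1'; rw [hxi]; constructor <;> linarith
          · by_cases h2' : k = j
            · subst h2'; rw [hxj]; have := hbound k; constructor <;> linarith
            · rw [hxt k h1' h2']; exact hbound k
        · rw [hxdef]
          simp only [Finset.sum_add_distrib, Finset.sum_ite_eq', Finset.mem_univ,
            if_true, hsum]
          ring
      have hy : y ∈ {p : Fin (M + 1) → ℝ | (∀ k, 0 ≤ p k ∧ p k ≤ 1 - ε) ∧ ∑ k, p k = 1} := by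
        constructor
        · intro k
          by_cases h1' : k = i
          · subst h1'; rw [hyi]; constructor <;> linarith
          · by_cases h2' : k = j
            · subst h2'; rw [hyj]; have := hbound k; constructor <;> linarith
            · rw [hyt k h1' h2']; exact hbound k
        · rw [hydef]
          simp only [Finset.sum_add_distrib, Finset.sum_ite_eq', Finset.mem_univ,
            if_true, hsum]
          ring
      have hxy : ∀ t, x t + y t = 2 * p t := by
        intro t
        by_cases h1' : t = i
        · subst h1'; rw [hxi, hyi]; ring
        · by_cases h2' : t = j
          · subst h2'; rw [hxj, hyj]; ring
          · rw [hxt t h1' h2', hyt t h1' h2']; ring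
      clear_value x y δ
      have hseg : p ∈ openSegment ℝ x y := by
        refine ⟨1/2, 1/2, by norm_num, by norm_num, by norm_num, ?_⟩
        funext t
        rw [Pi.add_apply, Pi.smul_apply, Pi.smul_apply, smul_eq_mul, smul_eq_mul]
        have := hxy t
        linarith
      have hxp := hext hx hy hseg
      have := congrFun hxp i
      rw [hxi] at this
      linarith
    by_cases hA : ∃ k₂, 0 < p k₂ ∧ p k₂ < 1 - ε
    · -- case 1: one interior coordinate
      obtain ⟨k₂, hk₂1, hk₂2⟩ := hA
      have hzero : ∀ j, j ≠ k₂ → p j ≠ 1 - ε → p j = 0 := by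
        intro j hj hj'
        by_contra h0
        have hj0 : 0 < p j := lt_of_le_of_ne (hbound j).1 (Ne.symm h0)
        have hj1 : p j < 1 - ε := lt_of_le_of_ne (hbound j).2 hj'
        exact hkey j k₂ hj ⟨hj0, hj1, hk₂1, hk₂2⟩
      set B : Finset (Fin (M+1)) := Finset.univ.filter (fun k => p k = 1 - ε) with hBdef
      have hsplit : ∑ k ∈ B, p k + ∑ k ∈ Finset.univ.filter (fun k => ¬ p k = 1 - ε), p k = 1 := by
        rw [hBdef, Finset.sum_filter_add_sum_filter_not]
        exact hsum
      have hBsum : ∑ k ∈ B, p k = (B.card : ℝ) * (1 - ε) := by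
        rw [Finset.sum_congr rfl (fun k hk => (Finset.mem_filter.mp hk).2)]
        simp [mul_comm]
        rw [hBdef]; ring
      have hCsum : ∑ k ∈ Finset.univ.filter (fun k => ¬ p k = 1 - ε), p k = p k₂ := by
        apply Finset.sum_eq_single_of_mem
        · simp [ne_of_lt hk₂2]
        · intro j hj hjne
          exact hzero j hjne (by simpa using (Finset.mem_filter.mp hj).2)
      rw [hBsum, hCsum] at hsplit
      have hcard : B.card = 1 := by
        rcases Nat.lt_or_ge B.card 1 with h | h
        · have h0 : B.card = 0 := by omega
          rw [h0] at hsplit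
          push_cast at hsplit
          linarith
        · rcases Nat.lt_or_ge B.card 2 with h' | h'
          · omega
          · exfalso
            have hc2 : (2:ℝ) ≤ (B.card : ℝ) := by exact_mod_cast h'
            have hmul : 2 * (1 - ε) ≤ (B.card : ℝ) * (1 - ε) :=
              mul_le_mul_of_nonneg_right hc2 (by linarith)
            linarith
      obtain ⟨k₁, hk₁⟩ := Finset.card_eq_one.mp hcard
      have hpk₁ : p k₁ = 1 - ε := by
        have : k₁ ∈ B := hk₁ ▸ Finset.mem_singleton_self k₁
        exact (Finset.mem_filter.mp this).2
      have hpk₂ : p k₂ = ε := by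
        rw [hcard] at hsplit; push_cast at hsplit; linarith
      have hne : k₁ ≠ k₂ := by
        intro h; rw [h, hpk₂] at hpk₁; linarith
      refine ⟨k₁, k₂, hne, ?_⟩
      funext j
      by_cases h1' : j = k₁
      · rw [h1', if_pos rfl]; exact hpk₁
      · by_cases h2' : j = k₂
        · rw [h2', if_neg (Ne.symm hne), if_pos rfl]; exact hpk₂
        · rw [if_neg h1', if_neg h2']
          apply hzero j h2'
          intro hj
          have : j ∈ B := Finset.mem_filter.mpr ⟨Finset.mem_univ j, hj⟩
          rw [hk₁, Finset.mem_singleton] at this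
          exact h1' this
    · -- case 2: every coordinate is 0 or 1-ε
      push_neg at hA
      have hzero : ∀ j, p j ≠ 1 - ε → p j = 0 := by
        intro j hj'
        by_contra h0
        have hj0 : 0 < p j := lt_of_le_of_ne (hbound j).1 (Ne.symm h0)
        have hj1 : p j < 1 - ε := lt_of_le_of_ne (hbound j).2 hj'
        exact absurd (hA j hj0) (not_le.mpr hj1)
      set B : Finset (Fin (M+1)) := Finset.univ.filter (fun k => p k = 1 - ε) with hBdef
      have hsplit : ∑ k ∈ B, p k + ∑ k ∈ Finset.univ.filter (fun k => ¬ p k = 1 - ε), p k = 1 := by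
        rw [hBdef, Finset.sum_filter_add_sum_filter_not]
        exact hsum
      have hBsum : ∑ k ∈ B, p k = (B.card : ℝ) * (1 - ε) := by
        rw [Finset.sum_congr rfl (fun k hk => (Finset.mem_filter.mp hk).2)]
        simp [mul_comm]
        rw [hBdef]; ring
      have hCsum : ∑ k ∈ Finset.univ.filter (fun k => ¬ p k = 1 - ε), p k = 0 := by
        apply Finset.sum_eq_zero
        intro j hj
        exact hzero j (by simpa using (Finset.mem_filter.mp hj).2)
      rw [hBsum, hCsum] at hsplit
      have hcard : B.card = 2 := by
        rcases Nat.lt_or_ge B.card 2 with h | h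
        · exfalso
          have hc1 : (B.card : ℝ) ≤ 1 := by exact_mod_cast Nat.lt_succ_iff.mp h
          have hmul : (B.card : ℝ) * (1 - ε) ≤ 1 * (1 - ε) :=
            mul_le_mul_of_nonneg_right hc1 (by linarith)
          linarith
        · rcases Nat.lt_or_ge B.card 3 with h' | h'
          · omega
          · exfalso
            have hc3 : (3:ℝ) ≤ (B.card : ℝ) := by exact_mod_cast h'
            have hmul : 3 * (1 - ε) ≤ (B.card : ℝ) * (1 - ε) :=
              mul_le_mul_of_nonneg_right hc3 (by linarith)
            linarith
      have hεeq : ε = 1/2 := by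
        rw [hcard] at hsplit; push_cast at hsplit; linarith
      obtain ⟨k₁, k₂, hne, hB⟩ := Finset.card_eq_two.mp hcard
      have hpk₁ : p k₁ = 1 - ε := by
        have : k₁ ∈ B := by rw [hB]; simp
        exact (Finset.mem_filter.mp this).2
      have hpk₂ : p k₂ = 1 - ε := by
        have : k₂ ∈ B := by rw [hB]; simp
        exact (Finset.mem_filter.mp this).2
      refine ⟨k₁, k₂, hne, ?_⟩
      funext j
      by_cases h1' : j = k₁
      · rw [h1', if_pos rfl]; exact hpk₁
      · by_cases h2' : j = k₂
        · rw [h2', if_neg (Ne.symm hne), if_pos rfl, hpk₂, hεeq]; norm_num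
        · rw [if_neg h1', if_neg h2']
          apply hzero j
          intro hj
          have : j ∈ B := Finset.mem_filter.mpr ⟨Finset.mem_univ j, hj⟩
          rw [hB] at this
          simp [h1', h2'] at this
  · -- special form → extreme point
    rintro ⟨k₁, k₂, hne, rfl⟩
    rw [mem_extremePoints]
    constructor
    · constructor
      · intro k
        show 0 ≤ (if k = k₁ then 1 - ε else if k = k₂ then ε else 0) ∧
          (if k = k₁ then 1 - ε else if k = k₂ then ε else 0) ≤ 1 - ε
        by_cases h1' : k = k₁
        · rw [if_pos h1']
          exact ⟨by linarith, le_refl _⟩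
        · rw [if_neg h1']
          by_cases h2' : k = k₂
          · rw [if_pos h2']
            exact ⟨le_of_lt hε0, by linarith⟩
          · rw [if_neg h2']
            exact ⟨le_refl 0, by linarith⟩
      · rw [sum_two_ite _ _ _ hne]; ring
    · rintro x ⟨hxb, hxs⟩ y ⟨hyb, hys⟩ ⟨a, b, ha, hb, hab, hq⟩
      have hcoord : ∀ t, a * x t + b * y t
          = (if t = k₁ then 1 - ε else if t = k₂ then ε else 0) := by
        intro t
        have := congrFun hq t
        simpa using this
      have habε : a * (1 - ε) + b * (1 - ε) = 1 - ε := by rw [← add_mul, hab, one_mul]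
      -- at k₁ : the maximum is attained, so both are 1-ε
      have hx₁ : x k₁ = 1 - ε := by
        by_contra hcon
        have hlt : x k₁ < 1 - ε := lt_of_le_of_ne (hxb k₁).2 hcon
        have h := hcoord k₁
        rw [if_pos rfl] at h
        have h1 := mul_lt_mul_of_pos_left hlt ha
        have h2 := mul_le_mul_of_nonneg_left (hyb k₁).2 hb.le
        linarith
      have hy₁ : y k₁ = 1 - ε := by
        by_contra hcon
        have hlt : y k₁ < 1 - ε := lt_of_le_of_ne (hyb k₁).2 hcon
        have h := hcoord k₁
        rw [if_pos rfl] at h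
        have h1 := mul_lt_mul_of_pos_left hlt hb
        have h2 := mul_le_mul_of_nonneg_left (hxb k₁).2 ha.le
        linarith
      -- at other coordinates: both are 0
      have hx0 : ∀ t, t ≠ k₁ → t ≠ k₂ → x t = 0 := by
        intro t h1' h2'
        by_contra hcon
        have hlt : 0 < x t := lt_of_le_of_ne (hxb t).1 (Ne.symm hcon)
        have h := hcoord t
        rw [if_neg h1', if_neg h2'] at h
        have h1 := mul_pos ha hlt
        have h2 := mul_nonneg hb.le (hyb t).1
        linarith
      have hy0 : ∀ t, t ≠ k₁ → t ≠ k₂ → y t = 0 := by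
        intro t h1' h2'
        by_contra hcon
        have hlt : 0 < y t := lt_of_le_of_ne (hyb t).1 (Ne.symm hcon)
        have h := hcoord t
        rw [if_neg h1', if_neg h2'] at h
        have h1 := mul_pos hb hlt
        have h2 := mul_nonneg ha.le (hxb t).1
        linarith
      -- the k₂ coordinate via the sum
      have hx₂ : x k₂ = ε := by
        have key := eq_of_sum_eq_of_ne _ k₂ x
            (fun t' => if t' = k₁ then 1 - ε else if t' = k₂ then ε else 0)
            (fun j hj => by
              by_cases hj1 : j = k₁
              · subst hj1; simpa using hx₁
              · simp [hj1, hj, hx0 j hj1 hj])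
            (by rw [hxs, sum_two_ite _ _ _ hne]; ring)
        simpa [Ne.symm hne] using key
      have hy₂ : y k₂ = ε := by
        have key := eq_of_sum_eq_of_ne _ k₂ y
            (fun t' => if t' = k₁ then 1 - ε else if t' = k₂ then ε else 0)
            (fun j hj => by
              by_cases hj1 : j = k₁
              · subst hj1; simpa using hy₁
              · simp [hj1, hj, hy0 j hj1 hj])
            (by rw [hys, sum_two_ite _ _ _ hne]; ring)
        simpa [Ne.symm hne] using key
      constructor
      · funext t
        by_cases h1' : t = k₁
        · rw [h1', if_pos rfl]; exact hx₁
        · by_cases h2' : t = k₂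
          · rw [h2', if_neg (Ne.symm hne), if_pos rfl]; exact hx₂
          · rw [if_neg h1', if_neg h2']; exact hx0 t h1' h2'
      · funext t
        by_cases h1' : t = k₁
        · rw [h1', if_pos rfl]; exact hy₁
        · by_cases h2' : t = k₂
          · rw [h2', if_neg (Ne.symm hne), if_pos rfl]; exact hy₂
          · rw [if_neg h1', if_neg h2']; exact hy0 t h1' h2'
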